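/- Let n ≥ 2 and suppose q(A) > 0 for every A ⊆ [n]. Then for a semicoherent structure function φ, the normalized Shannon entropy of the signature (p_1,…,p_n), where p_k = ℙ(T = X_{k:n}), equals 0 if and only if there exists k ∈ [n] such that φ(A) = 1 exactly when |A| ≥ n−k+1 (i.e. the system is a k-out-of-n system). -/

import Mathlib

open MeasureTheory ProbabilityTheory Finset

/-- The `k`-th order statistic (`k`-th smallest value) of `X 1 ω, …, X n ω`,
valued in `EReal` with the convention that the `0`-th order statistic is `−∞`. -/
noncomputable def orderStatE {Ω : Type*} {n : ℕ} (X : Fin n → Ω → ℝ) (k : ℕ) (ω : Ω) : EReal :=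
  sInf {t : EReal | k ≤ (Finset.univ.filter fun i => (X i ω : EReal) ≤ t).card}

namespace BP18

variable {Ω : Type*} {n : ℕ}

/-- number of indices `j` with `X j ω ≤ X i ω`. -/
noncomputable def cnt (X : Fin n → Ω → ℝ) (ω : Ω) (i : Fin n) : ℕ :=
  (Finset.univ.filter fun j => X j ω ≤ X i ω).card

noncomputable def Tf (X : Fin n → Ω → ℝ) (φ : Finset (Fin n) → ℕ) (ω : Ω) : EReal :=
  ⨆ (A : Finset (Fin n)) (_ : φ A = 1), ⨅ i ∈ A, (X i ω : EReal)

lemma cnt_pos (X : Fin n → Ω → ℝ) (ω : Ω) (i : Fin n) : 1 ≤ cnt X ω i := by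
  rw [cnt, Nat.one_le_iff_ne_zero, Ne, Finset.card_eq_zero, ← Ne,
    ← Finset.nonempty_iff_ne_empty]
  exact ⟨i, by simp⟩

lemma cnt_le (X : Fin n → Ω → ℝ) (ω : Ω) (i : Fin n) : cnt X ω i ≤ n := by
  simpa [cnt] using Finset.card_le_univ (univ.filter fun j => X j ω ≤ X i ω)

lemma cnt_lt_of_lt {X : Fin n → Ω → ℝ} {ω : Ω} {i j : Fin n} (h : X i ω < X j ω) :
    cnt X ω i < cnt X ω j := by
  apply Finset.card_lt_card
  constructor
  · intro m hm
    simp only [Finset.mem_filter, Finset.mem_univ, true_and] at hm ⊢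
    exact hm.trans h.le
  · intro hsub
    have := hsub (by simp : j ∈ univ.filter fun m => X m ω ≤ X j ω)
    simp only [Finset.mem_filter, Finset.mem_univ, true_and] at this
    exact absurd this (not_le.mpr h)

lemma lt_of_cnt_lt {X : Fin n → Ω → ℝ} {ω : Ω} {i j : Fin n} (h : cnt X ω i < cnt X ω j) :
    X i ω < X j ω := by
  by_contra hc
  push_neg at hc
  have : cnt X ω j ≤ cnt X ω i := by
    apply Finset.card_le_card
    intro m hm
    simp only [Finset.mem_filter, Finset.mem_univ, true_and] at hm ⊢
    exact hm.trans hc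
  omega

lemma cnt_surj {X : Fin n → Ω → ℝ} {ω : Ω}
    (hd : ∀ i j : Fin n, i ≠ j → X i ω ≠ X j ω) {k : ℕ} (hk : k ∈ Finset.Icc 1 n) :
    ∃ i, cnt X ω i = k := by
  have hinj : Function.Injective (cnt X ω) := by
    intro i j hij
    by_contra hne
    rcases lt_or_gt_of_ne (hd i j hne) with h | h
    · exact absurd hij (cnt_lt_of_lt h).ne
    · exact absurd hij.symm (cnt_lt_of_lt h).ne
  have hsub : Finset.univ.image (cnt X ω) ⊆ Finset.Icc 1 n := by
    intro m hm
    simp only [Finset.mem_image] at hm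
    obtain ⟨i, _, rfl⟩ := hm
    exact Finset.mem_Icc.mpr ⟨cnt_pos X ω i, cnt_le X ω i⟩
  have hcard : (Finset.univ.image (cnt X ω)).card = n := by
    rw [Finset.card_image_of_injective _ hinj, Finset.card_univ, Fintype.card_fin]
  have : Finset.univ.image (cnt X ω) = Finset.Icc 1 n := by
    apply Finset.eq_of_subset_of_card_le hsub
    rw [hcard, Nat.card_Icc]; omega
  rw [← this] at hk
  simpa using hk

lemma orderStat_eq_of_cnt {X : Fin n → Ω → ℝ} {ω : Ω} {i : Fin n} {k : ℕ}
    (h : cnt X ω i = k) : orderStatE X k ω = (X i ω : EReal) := by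
  have hmemiff : ∀ t : ℝ, ((univ.filter fun j => (X j ω : EReal) ≤ (t : EReal)).card
      = (univ.filter fun j => X j ω ≤ t).card) := by
    intro t
    congr 1
    apply Finset.filter_congr
    intro j _
    simp [EReal.coe_le_coe_iff]
  apply le_antisymm
  · apply sInf_le
    show k ≤ _
    rw [hmemiff]
    exact le_of_eq h.symm
  · apply le_sInf
    intro t ht
    by_contra hc
    push_neg at hc
    have hsub : (univ.filter fun j => (X j ω : EReal) ≤ t)
        ⊆ (univ.filter fun j => X j ω ≤ X i ω).erase i := by
      intro j hj
      simp only [Finset.mem_filter, Finset.mem_univ, true_and] at hj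
      have hjlt : (X j ω : EReal) < (X i ω : EReal) := lt_of_le_of_lt hj hc
      rw [EReal.coe_lt_coe_iff] at hjlt
      simp only [Finset.mem_erase, Finset.mem_filter, Finset.mem_univ, true_and]
      refine ⟨fun hji => ?_, hjlt.le⟩
      subst hji; exact lt_irrefl _ hjlt
    have hcard : (univ.filter fun j => (X j ω : EReal) ≤ t).card ≤ k - 1 := by
      calc _ ≤ ((univ.filter fun j => X j ω ≤ X i ω).erase i).card := Finset.card_le_card hsub
        _ = k - 1 := by
          have h' : (univ.filter fun j => X j ω ≤ X i ω).card = k := h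
          rw [Finset.card_erase_of_mem (by simp), h']
    have hk1 : 1 ≤ k := h ▸ cnt_pos X ω i
    have := ht
    simp only [Set.mem_setOf_eq] at this
    omega

lemma orderStat_formula (X : Fin n → Ω → ℝ) (k : ℕ) (ω : Ω) :
    orderStatE X k ω
      = ⨅ (A : Finset (Fin n)) (_ : A.card = k), ⨆ i ∈ A, (X i ω : EReal) := by
  apply le_antisymm
  · apply le_iInf₂
    intro A hA
    apply sInf_le
    show k ≤ _
    calc k = A.card := hA.symm
      _ ≤ _ := by
        apply Finset.card_le_card
        intro i hi
        simp only [Finset.mem_filter, Finset.mem_univ, true_and]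
        exact le_iSup₂ (f := fun i (_ : i ∈ A) => (X i ω : EReal)) i hi
  · apply le_sInf
    intro t ht
    simp only [Set.mem_setOf_eq] at ht
    obtain ⟨A, hAsub, hAcard⟩ := Finset.exists_subset_card_eq ht
    refine iInf₂_le_of_le A hAcard ?_
    apply iSup₂_le
    intro i hi
    have := hAsub hi
    simp only [Finset.mem_filter, Finset.mem_univ, true_and] at this
    exact this

lemma Tf_le {X : Fin n → Ω → ℝ} {φ : Finset (Fin n) → ℕ} {ω : Ω} {B : Finset (Fin n)}
    (hB : φ B = 1) : (⨅ i ∈ B, (X i ω : EReal)) ≤ Tf X φ ω :=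
  le_iSup₂ (f := fun A (_ : φ A = 1) => ⨅ i ∈ A, (X i ω : EReal)) B hB

lemma Tf_attained (X : Fin n → Ω → ℝ) (φ : Finset (Fin n) → ℕ) (ω : Ω)
    (hfull : φ Finset.univ = 1) (hempty : φ ∅ = 0) :
    ∃ B i, φ B = 1 ∧ i ∈ B ∧ (∀ j ∈ B, X i ω ≤ X j ω) ∧ Tf X φ ω = (X i ω : EReal) := by
  classical
  set s : Finset (Finset (Fin n)) := Finset.univ.filter (fun A => φ A = 1) with hs
  have hsne : s.Nonempty := ⟨Finset.univ, by simp [hs, hfull]⟩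
  have h1 : Tf X φ ω = s.sup (fun A => ⨅ i ∈ A, (X i ω : EReal)) := by
    rw [Finset.sup_eq_iSup]
    simp [Tf, hs]
  obtain ⟨B, hBs, hB⟩ := Finset.exists_mem_eq_sup s hsne (fun A => ⨅ i ∈ A, (X i ω : EReal))
  have hφB : φ B = 1 := by simpa [hs] using hBs
  have hBne : B.Nonempty := by
    rw [Finset.nonempty_iff_ne_empty]
    rintro rfl
    rw [hempty] at hφB
    omega
  obtain ⟨i, hiB, hmin⟩ := Finset.exists_min_image B (fun j => X j ω) hBne
  refine ⟨B, i, hφB, hiB, hmin, ?_⟩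
  rw [h1, hB]
  apply le_antisymm
  · exact iInf₂_le i hiB
  · exact le_iInf₂ fun j hj => EReal.coe_le_coe_iff.mpr (hmin j hj)

lemma Tf_cover {X : Fin n → Ω → ℝ} {φ : Finset (Fin n) → ℕ} (ω : Ω)
    (hfull : φ Finset.univ = 1) (hempty : φ ∅ = 0) :
    ∃ k ∈ Finset.Icc 1 n, Tf X φ ω = orderStatE X k ω := by
  obtain ⟨B, i, hφB, hiB, hmin, hTeq⟩ := Tf_attained X φ ω hfull hempty
  refine ⟨cnt X ω i, Finset.mem_Icc.mpr ⟨cnt_pos X ω i, cnt_le X ω i⟩, ?_⟩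
  rw [hTeq, orderStat_eq_of_cnt rfl]

lemma orderStat_ne {X : Fin n → Ω → ℝ} {ω : Ω}
    (hd : ∀ i j : Fin n, i ≠ j → X i ω ≠ X j ω) {k k' : ℕ}
    (hk : k ∈ Finset.Icc 1 n) (hk' : k' ∈ Finset.Icc 1 n) (hne : k ≠ k') :
    orderStatE X k ω ≠ orderStatE X k' ω := by
  obtain ⟨i, hi⟩ := cnt_surj hd hk
  obtain ⟨i', hi'⟩ := cnt_surj hd hk'
  rw [orderStat_eq_of_cnt hi, orderStat_eq_of_cnt hi']
  have hii' : i ≠ i' := by rintro rfl; rw [hi] at hi'; exact hne hi'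
  exact fun hc => hd i i' hii' (EReal.coe_eq_coe_iff.mp hc)

lemma measurable_orderStat {X : Fin n → Ω → ℝ} [MeasurableSpace Ω]
    (hX : ∀ i, Measurable (X i)) (k : ℕ) : Measurable (orderStatE X k) := by
  have : orderStatE X k = fun ω =>
      ⨅ (A : Finset (Fin n)) (_ : A.card = k), ⨆ i ∈ A, (X i ω : EReal) := by
    funext ω; exact orderStat_formula X k ω
  rw [this]
  refine Measurable.iInf fun A => Measurable.iInf fun _ => ?_
  exact Measurable.iSup fun i => Measurable.iSup fun _ =>
    measurable_coe_real_ereal.comp (hX i)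

lemma measurable_Tf {X : Fin n → Ω → ℝ} {φ : Finset (Fin n) → ℕ} [MeasurableSpace Ω]
    (hX : ∀ i, Measurable (X i)) : Measurable (Tf X φ) := by
  refine Measurable.iSup fun A => Measurable.iSup fun _ => ?_
  exact Measurable.iInf fun i => Measurable.iInf fun _ =>
    measurable_coe_real_ereal.comp (hX i)

/-- On the top-set event for `A` with `i₀` the minimum of `A`, the set of
indices `j` with `X j ω ≤ X i₀ ω` is `insert i₀ (univ \ A)`. -/
lemma cnt_top_set {X : Fin n → Ω → ℝ} {ω : Ω} {A : Finset (Fin n)}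
    (hd : ∀ i j : Fin n, i ≠ j → X i ω ≠ X j ω)
    (hQ : ∀ i, i ∉ A → ∀ l ∈ A, X i ω < X l ω)
    {i₀ : Fin n} (hi₀ : i₀ ∈ A) (hmin : ∀ j ∈ A, X i₀ ω ≤ X j ω) :
    cnt X ω i₀ = n - A.card + 1 := by
  have hfe : (Finset.univ.filter fun j => X j ω ≤ X i₀ ω)
      = insert i₀ (Finset.univ \ A) := by
    ext j
    simp only [Finset.mem_filter, Finset.mem_univ, true_and, Finset.mem_insert,
      Finset.mem_sdiff]
    constructor
    · intro hj
      by_cases hjA : j ∈ A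
      · left
        by_contra hji
        have hlt : X i₀ ω < X j ω :=
          lt_of_le_of_ne (hmin j hjA) (hd i₀ j (fun h => hji h.symm))
        exact absurd hj (not_le.mpr hlt)
      · right; exact hjA
    · rintro (rfl | hjA)
      · exact le_refl _
      · exact (hQ j hjA i₀ hi₀).le
  rw [cnt, hfe, Finset.card_insert_of_notMem (by simp [hi₀]), Finset.card_sdiff_of_subset
    (Finset.subset_univ A), Finset.card_univ, Fintype.card_fin]

lemma pt_forward_work {X : Fin n → Ω → ℝ} {φ : Finset (Fin n) → ℕ} {ω : Ω}
    {A : Finset (Fin n)} {k : ℕ}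
    (hd : ∀ i j : Fin n, i ≠ j → X i ω ≠ X j ω)
    (hQ : ∀ i, i ∉ A → ∀ l ∈ A, X i ω < X l ω)
    (hk : k ∈ Finset.Icc 1 n) (hcard : A.card = n - k + 1)
    (hT : Tf X φ ω = orderStatE X k ω)
    (hφ01 : ∀ B, φ B ≤ 1)
    (hmono : ∀ ⦃B C : Finset (Fin n)⦄, B ⊆ C → φ B ≤ φ C)
    (hempty : φ ∅ = 0) (hfull : φ Finset.univ = 1) : φ A = 1 := by
  rw [Finset.mem_Icc] at hk
  have hAne : A.Nonempty := Finset.card_pos.mp (by omega)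
  obtain ⟨i₀, hi₀, hmin⟩ := Finset.exists_min_image A (fun j => X j ω) hAne
  have hcnt : cnt X ω i₀ = k := by
    rw [cnt_top_set hd hQ hi₀ hmin, hcard]; omega
  have hoS : orderStatE X k ω = (X i₀ ω : EReal) := orderStat_eq_of_cnt hcnt
  obtain ⟨B, i, hφB, hiB, hminB, hTeq⟩ := Tf_attained X φ ω hfull hempty
  have hXii₀ : X i ω = X i₀ ω := by
    have : (X i ω : EReal) = (X i₀ ω : EReal) := by rw [← hTeq, hT, hoS]
    exact_mod_cast this
  have hBA : B ⊆ A := by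
    intro j hj
    by_contra hjA
    have h1 : X j ω < X i₀ ω := hQ j hjA i₀ hi₀
    have h2 : X i ω ≤ X j ω := hminB j hj
    rw [hXii₀] at h2
    exact absurd h1 (not_lt.mpr h2)
  have := hmono hBA
  rw [hφB] at this
  exact le_antisymm (hφ01 A) this

lemma pt_forward_fail {X : Fin n → Ω → ℝ} {φ : Finset (Fin n) → ℕ} {ω : Ω}
    {A : Finset (Fin n)} {k : ℕ}
    (hd : ∀ i j : Fin n, i ≠ j → X i ω ≠ X j ω)
    (hQ : ∀ i, i ∉ A → ∀ l ∈ A, X i ω < X l ω)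
    (hk : k ∈ Finset.Icc 1 n) (hcard : A.card = n - k)
    (hT : Tf X φ ω = orderStatE X k ω)
    (hφA : φ A = 1) (hempty : φ ∅ = 0) : False := by
  rw [Finset.mem_Icc] at hk
  have hAne : A.Nonempty := by
    rw [Finset.nonempty_iff_ne_empty]
    rintro rfl
    rw [hempty] at hφA; omega
  have hApos : 1 ≤ A.card := Finset.card_pos.mpr hAne
  obtain ⟨i₁, hi₁, hmin⟩ := Finset.exists_min_image A (fun j => X j ω) hAne
  have hcnt : cnt X ω i₁ = k + 1 := by
    rw [cnt_top_set hd hQ hi₁ hmin, hcard]; omega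
  obtain ⟨i₂, hi₂⟩ := cnt_surj hd (Finset.mem_Icc.mpr ⟨hk.1, hk.2⟩)
  have hlt : X i₂ ω < X i₁ ω := lt_of_cnt_lt (by omega)
  have h1 : (X i₁ ω : EReal) ≤ Tf X φ ω := by
    refine le_trans ?_ (Tf_le hφA)
    exact le_iInf₂ fun j hj => EReal.coe_le_coe_iff.mpr (hmin j hj)
  rw [hT, orderStat_eq_of_cnt hi₂, EReal.coe_le_coe_iff] at h1
  exact absurd hlt (not_lt.mpr h1)

lemma pt_backward {X : Fin n → Ω → ℝ} {φ : Finset (Fin n) → ℕ} {ω : Ω} {k : ℕ}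
    (hd : ∀ i j : Fin n, i ≠ j → X i ω ≠ X j ω)
    (hk : k ∈ Finset.Icc 1 n)
    (hiff : ∀ B : Finset (Fin n), φ B = 1 ↔ n - k + 1 ≤ B.card) :
    Tf X φ ω = orderStatE X k ω := by
  classical
  rw [Finset.mem_Icc] at hk
  obtain ⟨i, hi⟩ := cnt_surj hd (Finset.mem_Icc.mpr hk)
  rw [orderStat_eq_of_cnt hi]
  set C : Finset (Fin n) := Finset.univ.filter (fun j => X j ω ≤ X i ω) with hC
  have hCcard : C.card = k := hi
  apply le_antisymm
  · -- every working set meets C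
    apply iSup₂_le
    intro B hB
    have hBcard : n - k + 1 ≤ B.card := (hiff B).mp hB
    have hBC : ∃ j ∈ B, j ∈ C := by
      by_contra hc
      push_neg at hc
      have hsub : B ⊆ Finset.univ \ C := fun j hj => by
        simp [Finset.mem_sdiff, hc j hj]
      have := Finset.card_le_card hsub
      rw [Finset.card_sdiff_of_subset (Finset.subset_univ C), Finset.card_univ, Fintype.card_fin,
        hCcard] at this
      omega
    obtain ⟨j, hjB, hjC⟩ := hBC
    refine le_trans (iInf₂_le j hjB) ?_
    rw [EReal.coe_le_coe_iff]
    simpa [hC] using hjC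
  · -- the up-set of i works
    set A₀ : Finset (Fin n) := Finset.univ.filter (fun j => X i ω ≤ X j ω) with hA₀
    have hA₀card : A₀.card = n - k + 1 := by
      have hA₀eq : A₀ = Finset.univ \ C.erase i := by
        ext j
        simp only [hA₀, hC, Finset.mem_filter, Finset.mem_univ, true_and, Finset.mem_sdiff,
          Finset.mem_erase, not_and, not_le]
        constructor
        · intro hj hji
          exact lt_of_le_of_ne hj (hd i j hji.symm)
        · intro h
          by_cases hji : j = i
          · subst hji; exact le_refl _
          · exact (h hji).le
      have hiC : i ∈ C := by simp [hC]
      rw [hA₀eq, Finset.card_sdiff_of_subset (Finset.subset_univ _), Finset.card_univ, Fintype.card_fin,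
        Finset.card_erase_of_mem hiC, hCcard]
      omega
    have hφA₀ : φ A₀ = 1 := (hiff A₀).mpr hA₀card.ge
    refine le_trans ?_ (Tf_le hφA₀)
    refine le_iInf₂ fun j hj => ?_
    rw [EReal.coe_le_coe_iff]
    simpa [hA₀] using hj


theorem main_aux
    {Ω : Type*} [MeasureSpace Ω] [IsProbabilityMeasure (ℙ : Measure Ω)]
    {n : ℕ} (hn : 2 ≤ n) (X : Fin n → Ω → ℝ) (hX : ∀ i, Measurable (X i))
    (hties : ∀ i j : Fin n, i ≠ j → (ℙ : Measure Ω) {ω | X i ω = X j ω} = 0)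
    (hqpos : ∀ A : Finset (Fin n),
      0 < ((ℙ : Measure Ω) {ω | ∀ i, i ∉ A → ∀ l ∈ A, X i ω < X l ω}).toReal)
    (φ : Finset (Fin n) → ℕ) (hφ01 : ∀ A, φ A ≤ 1)
    (hmono : ∀ ⦃A B : Finset (Fin n)⦄, A ⊆ B → φ A ≤ φ B)
    (hempty : φ ∅ = 0) (hfull : φ Finset.univ = 1) :
    (-(1 / Real.log n) * ∑ k ∈ Finset.Icc 1 n,
        ((ℙ : Measure Ω) {ω | Tf X φ ω = orderStatE X k ω}).toReal
          * Real.log (((ℙ : Measure Ω) {ω | Tf X φ ω = orderStatE X k ω}).toReal) = 0)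
    ↔ ∃ k ∈ Finset.Icc 1 n, ∀ A : Finset (Fin n), (φ A = 1 ↔ n - k + 1 ≤ A.card) := by
  classical
  set E : ℕ → Set Ω := fun k => {ω | Tf X φ ω = orderStatE X k ω} with hE
  set D : Set Ω := {ω | ∀ i j : Fin n, i ≠ j → X i ω ≠ X j ω} with hD
  -- measurability of D
  have hDm : MeasurableSet D := by
    have hDeq : D = ⋂ (i : Fin n) (j : Fin n) (_ : i ≠ j), {ω | X i ω ≠ X j ω} := by
      ext ω; simp [hD, Set.mem_iInter]
    rw [hDeq]
    refine MeasurableSet.iInter fun i => MeasurableSet.iInter fun j =>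
      MeasurableSet.iInter fun _ => ?_
    exact (measurableSet_eq_fun (hX i) (hX j)).compl
  -- D has full measure
  have hDc : (ℙ : Measure Ω) Dᶜ = 0 := by
    have hsub : Dᶜ ⊆ ⋃ (i : Fin n) (j : Fin n), {ω | i ≠ j ∧ X i ω = X j ω} := by
      intro ω hω
      simp only [hD, Set.mem_compl_iff, Set.mem_setOf_eq] at hω
      push_neg at hω
      obtain ⟨i, j, hij, heq⟩ := hω
      exact Set.mem_iUnion.mpr ⟨i, Set.mem_iUnion.mpr ⟨j, ⟨hij, heq⟩⟩⟩
    apply measure_mono_null hsub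
    refine measure_iUnion_null fun i => measure_iUnion_null fun j => ?_
    by_cases hij : i = j
    · subst hij; simp
    · exact measure_mono_null (fun ω hω => hω.2) (hties i j hij)
  have hD1 : (ℙ : Measure Ω) D = 1 := by
    have h := measure_add_measure_compl (μ := (ℙ : Measure Ω)) hDm
    rw [hDc, add_zero, measure_univ] at h
    exact h
  -- measurability of the events
  have hEm : ∀ k, MeasurableSet (E k) := by
    intro k
    have h1 : E k = {ω | Tf X φ ω ≤ orderStatE X k ω} ∩
        {ω | orderStatE X k ω ≤ Tf X φ ω} := by
      ext ω
      simp only [hE, Set.mem_setOf_eq, Set.mem_inter_iff]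
      constructor
      · intro h; exact ⟨le_of_eq h, ge_of_eq h⟩
      · intro h; exact le_antisymm h.1 h.2
    rw [h1]
    exact (measurableSet_le (measurable_Tf hX) (measurable_orderStat hX k)).inter
      (measurableSet_le (measurable_orderStat hX k) (measurable_Tf hX))
  have hEfin : ∀ k, (ℙ : Measure Ω) (E k) ≠ ⊤ := fun k => measure_ne_top _ _
  -- ℙ (E k) = ℙ (E k ∩ D)
  have hEk_inter : ∀ k, (ℙ : Measure Ω) (E k) = (ℙ : Measure Ω) (E k ∩ D) := by
    intro k
    refine le_antisymm ?_ (measure_mono Set.inter_subset_left)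
    calc (ℙ : Measure Ω) (E k) ≤ (ℙ : Measure Ω) ((E k ∩ D) ∪ Dᶜ) := by
          apply measure_mono
          intro ω hω
          by_cases hωD : ω ∈ D
          · exact Or.inl ⟨hω, hωD⟩
          · exact Or.inr hωD
      _ ≤ (ℙ : Measure Ω) (E k ∩ D) + (ℙ : Measure Ω) Dᶜ := measure_union_le _ _
      _ = (ℙ : Measure Ω) (E k ∩ D) := by rw [hDc, add_zero]
  -- probabilities sum to one
  have hsum1 : ∑ k ∈ Finset.Icc 1 n, (ℙ : Measure Ω) (E k) = 1 := by
    have hdisj : (↑(Finset.Icc 1 n) : Set ℕ).PairwiseDisjoint (fun k => E k ∩ D) := by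
      intro k hk k' hk' hne
      rw [Finset.mem_coe] at hk hk'
      rw [Function.onFun, Set.disjoint_left]
      rintro ω ⟨hωE, hωD⟩ ⟨hωE', _⟩
      exact orderStat_ne hωD hk hk' hne (hωE ▸ hωE')
    have hbiUnion : ⋃ k ∈ Finset.Icc 1 n, (E k ∩ D) = D := by
      apply Set.Subset.antisymm
      · exact Set.iUnion₂_subset fun k _ => Set.inter_subset_right
      · intro ω hωD
        obtain ⟨k, hk, hTk⟩ := Tf_cover (X := X) (φ := φ) ω hfull hempty
        exact Set.mem_biUnion hk ⟨hTk, hωD⟩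
    calc ∑ k ∈ Finset.Icc 1 n, (ℙ : Measure Ω) (E k)
        = ∑ k ∈ Finset.Icc 1 n, (ℙ : Measure Ω) (E k ∩ D) :=
          Finset.sum_congr rfl fun k _ => hEk_inter k
      _ = (ℙ : Measure Ω) (⋃ k ∈ Finset.Icc 1 n, (E k ∩ D)) :=
          (measure_biUnion_finset hdisj (fun k _ => (hEm k).inter hDm)).symm
      _ = 1 := by rw [hbiUnion, hD1]
  have hsumreal : ∑ k ∈ Finset.Icc 1 n, ((ℙ : Measure Ω) (E k)).toReal = 1 := by
    rw [← ENNReal.toReal_sum (fun k _ => hEfin k), hsum1, ENNReal.toReal_one]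
  have hp0 : ∀ k, 0 ≤ ((ℙ : Measure Ω) (E k)).toReal := fun k => ENNReal.toReal_nonneg
  have hp1 : ∀ k, ((ℙ : Measure Ω) (E k)).toReal ≤ 1 := by
    intro k
    rw [← ENNReal.toReal_one]
    exact ENNReal.toReal_mono (by simp) prob_le_one
  have hlogn : Real.log n ≠ 0 := by
    have : (1 : ℝ) < n := by exact_mod_cast hn.trans_lt' one_lt_two
    exact (Real.log_pos this).ne'
  constructor
  · -- forward direction
    intro hent
    -- the sum itself vanishes
    have hS : ∑ k ∈ Finset.Icc 1 n,
        ((ℙ : Measure Ω) (E k)).toReal * Real.log (((ℙ : Measure Ω) (E k)).toReal) = 0 := by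
      rcases mul_eq_zero.mp hent with h | h
      · exfalso
        apply hlogn
        have : (1 : ℝ) / Real.log n = 0 := by
          have := neg_eq_zero.mp h
          exact this
        rcases div_eq_zero_iff.mp this with h1 | h1
        · exact absurd h1 one_ne_zero
        · exact h1
      · exact h
    have hterm : ∀ k ∈ Finset.Icc 1 n,
        ((ℙ : Measure Ω) (E k)).toReal * Real.log (((ℙ : Measure Ω) (E k)).toReal) = 0 := by
      apply (Finset.sum_eq_zero_iff_of_nonpos ?_).mp hS
      intro k _
      exact mul_nonpos_iff.mpr (Or.inl ⟨hp0 k, Real.log_nonpos (hp0 k) (hp1 k)⟩)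
    have h01 : ∀ k ∈ Finset.Icc 1 n,
        ((ℙ : Measure Ω) (E k)).toReal = 0 ∨ ((ℙ : Measure Ω) (E k)).toReal = 1 := by
      intro k hk
      rcases mul_eq_zero.mp (hterm k hk) with h | h
      · exact Or.inl h
      · rcases Real.log_eq_zero.mp h with h | h | h
        · exact Or.inl h
        · exact Or.inr h
        · exfalso; have := hp0 k; linarith
    -- some k with probability one
    have hex : ∃ k ∈ Finset.Icc 1 n, ((ℙ : Measure Ω) (E k)).toReal = 1 := by
      by_contra hc
      push_neg at hc
      have : ∑ k ∈ Finset.Icc 1 n, ((ℙ : Measure Ω) (E k)).toReal = 0 :=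
        Finset.sum_eq_zero fun k hk => (h01 k hk).resolve_right (hc k hk)
      rw [hsumreal] at this
      exact one_ne_zero this
    obtain ⟨k, hkIcc, hpk⟩ := hex
    have hEk1 : (ℙ : Measure Ω) (E k) = 1 := by
      rw [← ENNReal.ofReal_toReal (hEfin k), hpk]; simp
    have hEkc : (ℙ : Measure Ω) (E k)ᶜ = 0 := (prob_compl_eq_zero_iff (hEm k)).mpr hEk1
    -- pick a witness in each top-set event
    have hwitness : ∀ A : Finset (Fin n), ∃ ω,
        (∀ i, i ∉ A → ∀ l ∈ A, X i ω < X l ω) ∧ ω ∈ D ∧ ω ∈ E k := by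
      intro A
      set Q : Set Ω := {ω | ∀ i, i ∉ A → ∀ l ∈ A, X i ω < X l ω} with hQ
      have hQ0 : (ℙ : Measure Ω) Q ≠ 0 := by
        intro h0
        have := hqpos A
        rw [← hQ, h0] at this
        simp at this
      have hQDE : (ℙ : Measure Ω) (Q ∩ (D ∩ E k)) ≠ 0 := by
        intro h0
        apply hQ0
        have hsub : Q ⊆ (Q ∩ (D ∩ E k)) ∪ (Dᶜ ∪ (E k)ᶜ) := by
          intro ω hω
          by_cases hωD : ω ∈ D
          · by_cases hωE : ω ∈ E k
            · exact Or.inl ⟨hω, hωD, hωE⟩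
            · exact Or.inr (Or.inr hωE)
          · exact Or.inr (Or.inl hωD)
        refine le_antisymm ?_ zero_le
        calc (ℙ : Measure Ω) Q ≤ (ℙ : Measure Ω) ((Q ∩ (D ∩ E k)) ∪ (Dᶜ ∪ (E k)ᶜ)) :=
              measure_mono hsub
          _ ≤ (ℙ : Measure Ω) (Q ∩ (D ∩ E k)) + (ℙ : Measure Ω) (Dᶜ ∪ (E k)ᶜ) :=
              measure_union_le _ _
          _ ≤ (ℙ : Measure Ω) (Q ∩ (D ∩ E k)) +
                ((ℙ : Measure Ω) Dᶜ + (ℙ : Measure Ω) (E k)ᶜ) := by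
              gcongr
              exact measure_union_le _ _
          _ = 0 := by rw [h0, hDc, hEkc]; simp
      obtain ⟨ω, hωQ, hωD, hωE⟩ := MeasureTheory.nonempty_of_measure_ne_zero hQDE
      exact ⟨ω, hωQ, hωD, hωE⟩
    refine ⟨k, hkIcc, ?_⟩
    -- all sets of size n - k + 1 work
    have hwork : ∀ A : Finset (Fin n), A.card = n - k + 1 → φ A = 1 := by
      intro A hcard
      obtain ⟨ω, hωQ, hωD, hωE⟩ := hwitness A
      exact pt_forward_work hωD hωQ hkIcc hcard hωE hφ01 hmono hempty hfull
    -- all sets of size n - k fail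
    have hfail : ∀ A : Finset (Fin n), A.card = n - k → φ A = 0 := by
      intro A hcard
      by_contra hc
      have hφA : φ A = 1 := by have := hφ01 A; omega
      obtain ⟨ω, hωQ, hωD, hωE⟩ := hwitness A
      exact pt_forward_fail hωD hωQ hkIcc hcard hωE hφA hempty
    intro A
    rw [Finset.mem_Icc] at hkIcc
    constructor
    · intro hφA
      by_contra hc
      push_neg at hc
      have hAle : A.card ≤ n - k := by omega
      obtain ⟨B, hAB, hBcard⟩ := Finset.exists_superset_card_eq hAle
        (by simp only [Fintype.card_fin]; omega)
      have := hmono hAB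
      rw [hφA, hfail B hBcard] at this
      omega
    · intro hcard
      obtain ⟨B, hBA, hBcard⟩ := Finset.exists_subset_card_eq hcard
      have := hmono hBA
      rw [hwork B hBcard] at this
      have := hφ01 A
      omega
  · -- backward direction
    rintro ⟨k, hkIcc, hiff⟩
    have hDE : D ⊆ E k := fun ω hωD => pt_backward hωD hkIcc hiff
    have hEk1 : ((ℙ : Measure Ω) (E k)).toReal = 1 := by
      have h1 : (ℙ : Measure Ω) (E k) = 1 :=
        le_antisymm prob_le_one (hD1 ▸ measure_mono hDE)
      rw [h1, ENNReal.toReal_one]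
    have hEj0 : ∀ j ∈ Finset.Icc 1 n, j ≠ k → ((ℙ : Measure Ω) (E j)).toReal = 0 := by
      intro j hj hjk
      have hED : E j ∩ D = ∅ := by
        ext ω
        simp only [Set.mem_inter_iff, Set.mem_empty_iff_false, iff_false, not_and]
        intro hωE hωD
        exact orderStat_ne hωD hj hkIcc hjk (hωE.symm.trans (pt_backward hωD hkIcc hiff))
      rw [hEk_inter j, hED]
      simp
    have hS : ∑ j ∈ Finset.Icc 1 n,
        ((ℙ : Measure Ω) (E j)).toReal * Real.log (((ℙ : Measure Ω) (E j)).toReal) = 0 := by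
      apply Finset.sum_eq_zero
      intro j hj
      by_cases hjk : j = k
      · subst hjk
        rw [hEk1, Real.log_one, mul_zero]
      · rw [hEj0 j hj hjk, zero_mul]
    rw [hS, mul_zero]

end BP18


theorem barlow_proschan_stmt_18
    {Ω : Type*} [MeasureSpace Ω] [IsProbabilityMeasure (ℙ : Measure Ω)]
    {n : ℕ} (hn : 2 ≤ n) (X : Fin n → Ω → ℝ) (hX : ∀ i, Measurable (X i))
    (hties : ∀ i j : Fin n, i ≠ j → (ℙ : Measure Ω) {ω | X i ω = X j ω} = 0)
    (hqpos : ∀ A : Finset (Fin n),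
      0 < ((ℙ : Measure Ω) {ω | ∀ i, i ∉ A → ∀ l ∈ A, X i ω < X l ω}).toReal)
    (φ : Finset (Fin n) → ℕ) (hφ01 : ∀ A, φ A ≤ 1)
    (hmono : ∀ ⦃A B : Finset (Fin n)⦄, A ⊆ B → φ A ≤ φ B)
    (hempty : φ ∅ = 0) (hfull : φ Finset.univ = 1) :
    (-(1 / Real.log n) * ∑ k ∈ Finset.Icc 1 n,
        ((ℙ : Measure Ω) {ω |
            (⨆ (A : Finset (Fin n)) (_ : φ A = 1), ⨅ i ∈ A, (X i ω : EReal))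
              = orderStatE X k ω}).toReal
          * Real.log (((ℙ : Measure Ω) {ω |
              (⨆ (A : Finset (Fin n)) (_ : φ A = 1), ⨅ i ∈ A, (X i ω : EReal))
                = orderStatE X k ω}).toReal) = 0)
    ↔ ∃ k ∈ Finset.Icc 1 n, ∀ A : Finset (Fin n), (φ A = 1 ↔ n - k + 1 ≤ A.card) := by
  exact BP18.main_aux hn X hX hties hqpos φ hφ01 hmono hempty hfull
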